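/- There exists a constant C > 0 such that for every n ≥ 1 there is a decoder D_n : List Bool → List Bool → Bool with the following property: for every directed acyclic graph r : Fin n → Fin n → Prop (i.e., Relation.TransGen r is irreflexive) there exists a label assignment ℓ : Fin n → List Bool with (ℓ u).length ≤ n/2 + C·log(n+2) for every node u, and for all u, v: D_n (ℓ u) (ℓ v) = true if and only if Relation.ReflTransGen r u v. -/

import Mathlib

/-- Encode a natural number as a fixed-length list of bits (LSB first). -/
def toBits : ℕ → ℕ → List Bool
  | 0, _ => []
  | L + 1, m => (decide (m % 2 = 1)) :: toBits L (m / 2)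

/-- Decode a list of bits (LSB first) to a natural number. -/
def fromBits : List Bool → ℕ
  | [] => 0
  | b :: l => (if b then 1 else 0) + 2 * fromBits l

lemma toBits_length (L m : ℕ) : (toBits L m).length = L := by
  induction L generalizing m with
  | zero => rfl
  | succ L ih => simp [toBits, ih]

lemma fromBits_toBits (L m : ℕ) (h : m < 2 ^ L) : fromBits (toBits L m) = m := by
  induction L generalizing m with
  | zero => simp at h; simp [h, toBits, fromBits]
  | succ L ih =>
    have h2 : 2 ^ (L + 1) = 2 ^ L * 2 := pow_succ 2 L
    have hm : m / 2 < 2 ^ L := by omega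
    rw [toBits, fromBits, ih _ hm]
    rcases Nat.mod_two_eq_zero_or_one m with h0 | h0 <;> simp [h0] <;> omega

lemma size_le_three_log (n : ℕ) (hn : 1 ≤ n) :
    (Nat.size n : ℝ) ≤ 3 * Real.log (n + 2) := by
  have hsz : 1 ≤ Nat.size n := Nat.size_pos.mpr (by omega)
  have h1 : (2 : ℕ) ^ (Nat.size n - 1) ≤ n := Nat.lt_size.mp (by omega)
  have h1' : (2 : ℝ) ^ (Nat.size n - 1) ≤ (n : ℝ) := by exact_mod_cast h1
  have h2 : ((Nat.size n - 1 : ℕ) : ℝ) * Real.log 2 ≤ Real.log n := by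
    have := Real.log_le_log (by positivity) h1'
    rwa [Real.log_pow] at this
  have hcast : ((Nat.size n - 1 : ℕ) : ℝ) = (Nat.size n : ℝ) - 1 := by
    push_cast [hsz]; ring
  rw [hcast] at h2
  have hlog2 : (1 : ℝ) / 2 < Real.log 2 := by
    have := Real.log_two_gt_d9; linarith
  have hmono : Real.log n ≤ Real.log (n + 2) := by
    apply Real.log_le_log (by exact_mod_cast hn)
    linarith
  have hlogn2 : 1 ≤ Real.log (n + 2) := by
    have he : Real.exp 1 ≤ (n : ℝ) + 2 := by
      have h3 : (3 : ℝ) ≤ (n : ℝ) + 2 := by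
        have : (1 : ℝ) ≤ (n : ℝ) := by exact_mod_cast hn
        linarith
      have := Real.exp_one_lt_d9
      linarith
    calc (1 : ℝ) = Real.log (Real.exp 1) := (Real.log_exp 1).symm
      _ ≤ Real.log (n + 2) := Real.log_le_log (Real.exp_pos 1) he
  have hge : (0 : ℝ) ≤ (Nat.size n : ℝ) - 1 := by
    have : (1 : ℝ) ≤ (Nat.size n : ℝ) := by exact_mod_cast hsz
    linarith
  nlinarith [h2, hlog2, hlogn2, hge, hmono]

theorem reachability_labeling_dag_n_div_2 :
    ∃ C : ℝ, C > 0 ∧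
      ∀ n : ℕ, 1 ≤ n →
        ∃ D : List Bool → List Bool → Bool,
          ∀ r : Fin n → Fin n → Prop, Irreflexive (Relation.TransGen r) →
            ∃ ℓ : Fin n → List Bool,
              (∀ u : Fin n, ((ℓ u).length : ℝ) ≤ (n : ℝ) / 2 + C * Real.log (n + 2)) ∧
              (∀ u v : Fin n, D (ℓ u) (ℓ v) = true ↔ Relation.ReflTransGen r u v) := by
  classical
  refine ⟨3, by norm_num, fun n hn => ?_⟩
  set L := Nat.size n with hLdef
  set k := n / 2 with hkdef
  refine ⟨fun a b =>
    if fromBits (a.take L) = fromBits (b.take L) then true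
    else if fromBits (a.take L) < fromBits (b.take L) then
      (if fromBits (b.take L) - fromBits (a.take L) ≤ k then
        (a.drop L).getD (fromBits (b.take L) - fromBits (a.take L) - 1) false
      else
        (b.drop (L + min k (n - 1 - fromBits (b.take L)))).getD (fromBits (a.take L)) false)
    else false, fun r hr => ?_⟩
  -- ReflTransGen r is a partial order
  haveI hpo : IsPartialOrder (Fin n) (Relation.ReflTransGen r) :=
    { refl := fun _ => Relation.ReflTransGen.refl
      trans := fun _ _ _ hab hbc => hab.trans hbc
      antisymm := by
        intro a b hab hba
        by_contra hne
        rcases Relation.reflTransGen_iff_eq_or_transGen.mp hab with h | h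
        · exact hne h.symm
        rcases Relation.reflTransGen_iff_eq_or_transGen.mp hba with h' | h'
        · exact hne h'
        exact hr a (h.trans h') }
  obtain ⟨s, hlin, hsub⟩ := extend_partialOrder (Relation.ReflTransGen r)
  haveI := hlin
  -- position: number of strict s-predecessors
  set Fs : Fin n → Finset (Fin n) :=
    fun u => Finset.univ.filter (fun w => s w u ∧ w ≠ u) with hFs
  have hcard : ∀ u, (Fs u).card < n := by
    intro u
    have hsub' : Fs u ⊆ Finset.univ.erase u := by
      intro w hw
      simp only [hFs, Finset.mem_filter, Finset.mem_univ, true_and] at hw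
      exact Finset.mem_erase.mpr ⟨hw.2, Finset.mem_univ w⟩
    calc (Fs u).card ≤ (Finset.univ.erase u).card := Finset.card_le_card hsub'
      _ < n := by
          rw [Finset.card_erase_of_mem (Finset.mem_univ u), Finset.card_univ,
            Fintype.card_fin]
          omega
  have hmono : ∀ u v, s u v → u ≠ v → (Fs u).card < (Fs v).card := by
    intro u v huv hne
    have hins : insert u (Fs u) ⊆ Fs v := by
      intro w hw
      rcases Finset.mem_insert.mp hw with rfl | hw
      · simp only [hFs, Finset.mem_filter, Finset.mem_univ, true_and]
        exact ⟨huv, hne⟩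
      · simp only [hFs, Finset.mem_filter, Finset.mem_univ, true_and] at hw ⊢
        refine ⟨Trans.trans hw.1 huv, ?_⟩
        rintro rfl
        exact hne (antisymm huv hw.1)
    have hu : u ∉ Fs u := by
      simp [hFs]
    have : (Fs u).card + 1 ≤ (Fs v).card := by
      calc (Fs u).card + 1 = (insert u (Fs u)).card :=
            (Finset.card_insert_of_notMem hu).symm
        _ ≤ (Fs v).card := Finset.card_le_card hins
    omega
  set P : Fin n → Fin n := fun u => ⟨(Fs u).card, hcard u⟩ with hP
  have hPinj : Function.Injective P := by
    intro u v h
    by_contra hne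
    have hval : (Fs u).card = (Fs v).card := congrArg Fin.val h
    rcases total_of s u v with h1 | h1
    · exact absurd hval (Nat.ne_of_lt (hmono u v h1 hne))
    · exact absurd hval.symm (Nat.ne_of_lt (hmono v u h1 (Ne.symm hne)))
  set e := Equiv.ofBijective P (Finite.injective_iff_bijective.mp hPinj) with he
  set pos : Fin n → ℕ := fun u => ((P u : ℕ)) with hposdef
  have hposlt : ∀ u, pos u < n := fun u => (P u).isLt
  have hposinj : ∀ u v, pos u = pos v → u = v := by
    intro u v h
    exact hPinj (Fin.ext h)
  set Q : ℕ → Fin n := fun m => e.symm ⟨m % n, Nat.mod_lt _ (by omega)⟩ with hQ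
  have hQP : ∀ u, Q (pos u) = u := by
    intro u
    have hmod : pos u % n = pos u := Nat.mod_eq_of_lt (hposlt u)
    have h1 : (⟨pos u % n, Nat.mod_lt _ (by omega : 0 < n)⟩ : Fin n) = P u :=
      Fin.ext (by simp [hmod]; rfl)
    simp only [hQ, h1]
    have : P u = e u := rfl
    rw [this, Equiv.symm_apply_apply]
  have hreachlt : ∀ u v, Relation.ReflTransGen r u v → u ≠ v → pos u < pos v := by
    intro u v h hne
    exact hmono u v (hsub u v h) hne
  -- labels
  set Fp : Fin n → List Bool := fun u =>
    (List.range (min k (n - 1 - pos u))).map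
      (fun i => decide (Relation.ReflTransGen r u (Q (pos u + 1 + i)))) with hFp
  set Bp : Fin n → List Bool := fun u =>
    (List.range (pos u - k)).map
      (fun i => decide (Relation.ReflTransGen r (Q i) u)) with hBp
  set ℓ : Fin n → List Bool := fun u => toBits L (pos u) ++ (Fp u ++ Bp u) with hℓ
  have hFplen : ∀ u, (Fp u).length = min k (n - 1 - pos u) := by
    intro u; simp [hFp]
  have hBplen : ∀ u, (Bp u).length = pos u - k := by
    intro u; simp [hBp]
  have htake : ∀ u, (ℓ u).take L = toBits L (pos u) := by
    intro u
    exact List.take_left' (toBits_length L (pos u))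
  have hdecode : ∀ u, fromBits ((ℓ u).take L) = pos u := by
    intro u
    rw [htake u, fromBits_toBits]
    calc pos u < n := hposlt u
      _ < 2 ^ Nat.size n := Nat.lt_size_self n
  have hdrop : ∀ u, (ℓ u).drop L = Fp u ++ Bp u := by
    intro u
    exact List.drop_left' (toBits_length L (pos u))
  have hdropB : ∀ u, (ℓ u).drop (L + min k (n - 1 - pos u)) = Bp u := by
    intro u
    have : ℓ u = (toBits L (pos u) ++ Fp u) ++ Bp u := by
      rw [hℓ]; simp [List.append_assoc]
    rw [this]
    apply List.drop_left'
    simp [toBits_length, hFplen u]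
  refine ⟨ℓ, ?_, ?_⟩
  · -- length bound
    intro u
    have hlen : (ℓ u).length = L + (min k (n - 1 - pos u) + (pos u - k)) := by
      simp [hℓ, toBits_length, hFplen, hBplen]
    have hdata : 2 * (min k (n - 1 - pos u) + (pos u - k)) ≤ n := by
      have := hposlt u
      omega
    have hdata' : ((min k (n - 1 - pos u) + (pos u - k) : ℕ) : ℝ) ≤ (n : ℝ) / 2 := by
      have h := (Nat.cast_le (α := ℝ)).mpr hdata
      rw [Nat.cast_mul, Nat.cast_ofNat] at h
      linarith
    have hsize : (L : ℝ) ≤ 3 * Real.log (n + 2) := by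
      rw [hLdef]
      exact size_le_three_log n hn
    rw [hlen, Nat.cast_add]
    linarith
  · -- correctness
    intro u v
    simp only []
    rw [hdecode u, hdecode v]
    rcases eq_or_ne u v with rfl | huv
    · rw [if_pos rfl]
      simp [Relation.ReflTransGen.refl]
    · have hpne : pos u ≠ pos v := fun h => huv (hposinj u v h)
      rw [if_neg hpne]
      rcases lt_or_gt_of_ne hpne with hlt | hgt
      · rw [if_pos hlt]
        set d := pos v - pos u with hd
        have hd1 : 1 ≤ d := by omega
        have hvlt := hposlt v
        have hult := hposlt u
        by_cases hdk : d ≤ k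
        · rw [if_pos hdk, hdrop u]
          have hidx : d - 1 < (Fp u).length := by
            rw [hFplen u]; omega
          have hidx2 : d - 1 < (Fp u ++ Bp u).length := by
            rw [List.length_append]; omega
          rw [List.getD_eq_getElem _ _ hidx2, List.getElem_append_left hidx]
          have : (Fp u)[d - 1] =
              decide (Relation.ReflTransGen r u (Q (pos u + 1 + (d - 1)))) := by
            simp [hFp]
          rw [this]
          have harg : pos u + 1 + (d - 1) = pos v := by omega
          rw [harg, hQP v]
          simp
        · rw [if_neg hdk, hdropB v]
          have hidx : pos u < (Bp v).length := by
            rw [hBplen v]; omega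
          rw [List.getD_eq_getElem _ _ hidx]
          have : (Bp v)[pos u] =
              decide (Relation.ReflTransGen r (Q (pos u)) v) := by
            simp [hBp]
          rw [this, hQP u]
          simp
      · rw [if_neg (by omega : ¬ pos u < pos v)]
        simp only [Bool.false_eq_true, false_iff]
        intro hreach
        have := hreachlt u v hreach huv
        omega
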